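/- arXiv:1307.7763 — 4 statements merged into one kernel-verified Lean document; each statement's English description precedes it below -/
import Mathlib

section
/- For a finite group G with a normalized 3-cocycle ω, the operators V^ω(g) on (ℂG)^{⊗3} defined by V^ω(g) = Σ_{α,β,γ∈G} [ω(γα⁻¹, αg⁻¹, g) / (ω(βα⁻¹, αg⁻¹, g)·ω(γβ⁻¹, βg⁻¹, g))] |αg⁻¹, βg⁻¹, γg⁻¹⟩⟨α, β, γ| satisfy V^ω(g₁)·V^ω(g₂) = V^ω(g₁g₂) for all g₁,g₂ ∈ G. -/
open scoped BigOperators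
open Matrix

/-- The 3-cocycle condition for a `U(1)`-valued (unit-modulus) function. -/
def IsCocycle {G : Type*} [Group G] (ω : G → G → G → ℂ) : Prop :=
  ∀ a b c d : G, ω a b c * ω a (b * c) d * ω b c d = ω (a * b) c d * ω a b (c * d)

/-- `ω` is normalized: it equals 1 whenever any argument is the identity. -/
def IsNormalized {G : Type*} [Group G] (ω : G → G → G → ℂ) : Prop :=
  ∀ a b c : G, a = 1 ∨ b = 1 ∨ c = 1 → ω a b c = 1

/-- `ω` takes values on the unit circle. -/
def IsUnitary {G : Type*} [Group G] (ω : G → G → G → ℂ) : Prop :=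
  ∀ a b c : G, ‖ω a b c‖ = 1

/-- The twisted symmetry operator `V^ω(g)` on `(ℂG)^{⊗3}`, written as a matrix with
respect to the group-element basis of triples `(α,β,γ)`.  Its only nonzero entries are
`⟨αg⁻¹, βg⁻¹, γg⁻¹| V^ω(g) |α,β,γ⟩ = ω(γα⁻¹, αg⁻¹, g) / (ω(βα⁻¹, αg⁻¹, g)·ω(γβ⁻¹, βg⁻¹, g))`. -/
noncomputable def Vmat {G : Type*} [Group G] [DecidableEq G]
    (ω : G → G → G → ℂ) (g : G) : Matrix (G × G × G) (G × G × G) ℂ :=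
  fun r c =>
    if r = (c.1 * g⁻¹, c.2.1 * g⁻¹, c.2.2 * g⁻¹) then
      ω (c.2.2 * c.1⁻¹) (c.1 * g⁻¹) g /
        (ω (c.2.1 * c.1⁻¹) (c.1 * g⁻¹) g * ω (c.2.2 * c.2.1⁻¹) (c.2.1 * g⁻¹) g)
    else 0

theorem Vmat_mul {G : Type*} [Group G] [Fintype G] [DecidableEq G]
    (ω : G → G → G → ℂ) (hu : IsUnitary ω) (hω : IsCocycle ω) (hn : IsNormalized ω) :
    ∀ g₁ g₂ : G, Vmat ω g₁ * Vmat ω g₂ = Vmat ω (g₁ * g₂) := by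
  have hne : ∀ a b c : G, ω a b c ≠ 0 := by
    intro a b c h
    have := hu a b c
    rw [h] at this
    simp at this
  intro g₁ g₂
  have key : ∀ x α : G,
      ω x (α * (g₂⁻¹ * g₁⁻¹)) g₁ * ω x (α * g₂⁻¹) g₂ * ω (α * (g₂⁻¹ * g₁⁻¹)) g₁ g₂
        = ω (x * (α * (g₂⁻¹ * g₁⁻¹))) g₁ g₂ * ω x (α * (g₂⁻¹ * g₁⁻¹)) (g₁ * g₂) := by
    intro x α
    have := hω x (α * (g₂⁻¹ * g₁⁻¹)) g₁ g₂
    simpa [mul_assoc] using this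
  ext r c
  rw [Matrix.mul_apply]
  rw [Finset.sum_eq_single (c.1 * g₂⁻¹, c.2.1 * g₂⁻¹, c.2.2 * g₂⁻¹)]
  · by_cases hr : r = (c.1 * (g₁ * g₂)⁻¹, c.2.1 * (g₁ * g₂)⁻¹, c.2.2 * (g₁ * g₂)⁻¹)
    · subst hr
      obtain ⟨a, b, d⟩ := c
      simp only [Vmat, _root_.mul_inv_rev, mul_assoc, inv_inv, inv_mul_cancel_left,
        if_pos rfl, if_true]
      have h1 := key (d * a⁻¹) a
      have h2 := key (b * a⁻¹) a
      have h3 := key (d * b⁻¹) b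
      rw [show d * a⁻¹ * (a * (g₂⁻¹ * g₁⁻¹)) = d * (g₂⁻¹ * g₁⁻¹) by
        simp [mul_assoc]] at h1
      rw [show b * a⁻¹ * (a * (g₂⁻¹ * g₁⁻¹)) = b * (g₂⁻¹ * g₁⁻¹) by
        simp [mul_assoc]] at h2
      rw [show d * b⁻¹ * (b * (g₂⁻¹ * g₁⁻¹)) = d * (g₂⁻¹ * g₁⁻¹) by
        simp [mul_assoc]] at h3
      field_simp [hne]
      simp only [div_eq_mul_inv, mul_assoc]
      apply mul_right_cancel₀
        (mul_ne_zero (hne (a * (g₂⁻¹ * g₁⁻¹)) g₁ g₂) (hne (b * (g₂⁻¹ * g₁⁻¹)) g₁ g₂))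
      linear_combination
        (ω (b * a⁻¹) (a * (g₂⁻¹ * g₁⁻¹)) (g₁ * g₂) * ω (d * b⁻¹) (b * (g₂⁻¹ * g₁⁻¹)) (g₁ * g₂)
          * ω (b * (g₂⁻¹ * g₁⁻¹)) g₁ g₂) * h1
        - (ω (d * (g₂⁻¹ * g₁⁻¹)) g₁ g₂ * ω (d * a⁻¹) (a * (g₂⁻¹ * g₁⁻¹)) (g₁ * g₂)
          * ω (d * b⁻¹) (b * (g₂⁻¹ * g₁⁻¹)) (g₁ * g₂)) * h2
        - (ω (d * a⁻¹) (a * (g₂⁻¹ * g₁⁻¹)) (g₁ * g₂)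
          * ω (b * a⁻¹) (a * (g₂⁻¹ * g₁⁻¹)) g₁ * ω (b * a⁻¹) (a * g₂⁻¹) g₂
          * ω (a * (g₂⁻¹ * g₁⁻¹)) g₁ g₂) * h3
    · have h1 : ¬ ((r : G × G × G) = ((c.1 * g₂⁻¹) * g₁⁻¹, (c.2.1 * g₂⁻¹) * g₁⁻¹, (c.2.2 * g₂⁻¹) * g₁⁻¹)) := by
        simpa [_root_.mul_inv_rev, mul_assoc] using hr
      simp [Vmat, _root_.mul_inv_rev, mul_assoc] at h1 hr ⊢
      simp [h1, hr]
  · intro m _ hm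
    simp only [Vmat, if_neg hm, mul_zero]
  · simp
end

section
/- For a finite group G with a normalized 3-cocycle ω, the operator V^ω(g) on (ℂG)^{⊗3} defined by V^ω(g) = Σ_{α,β,γ} [ω(γα⁻¹, αg⁻¹, g)/(ω(βα⁻¹, αg⁻¹, g)·ω(γβ⁻¹, βg⁻¹, g))] |αg⁻¹, βg⁻¹, γg⁻¹⟩⟨α,β,γ| is unitary, with V^ω(g)† = V^ω(g⁻¹). -/
open scoped BigOperators
open Matrix

section Aux

variable {G : Type*} [Group G]

lemma omega_ne_zero {ω : G → G → G → ℂ} (hu : IsUnitary ω) (a b c : G) : ω a b c ≠ 0 := by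
  intro h0
  have := hu a b c
  rw [h0] at this
  simp at this

lemma conj_omega {ω : G → G → G → ℂ} (hu : IsUnitary ω) (a b c : G) :
    (starRingEnd ℂ) (ω a b c) = (ω a b c)⁻¹ := (Complex.inv_eq_conj (hu a b c)).symm

lemma unit_mul_conj {z : ℂ} (h : ‖z‖ = 1) : z * (starRingEnd ℂ) z = 1 := by
  rw [Complex.mul_conj, ← Complex.sq_norm, h]
  norm_num

/-- The basic consequence of the cocycle identity used below. -/
lemma key1 {ω : G → G → G → ℂ} (hω : IsCocycle ω) (hn : IsNormalized ω) (g x h : G) :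
    ω x (h * g⁻¹) g * ω x h g⁻¹ * ω (h * g⁻¹) g g⁻¹ = ω (x * h * g⁻¹) g g⁻¹ := by
  have H := hω x (h * g⁻¹) g g⁻¹
  rw [inv_mul_cancel_right, mul_inv_cancel, hn x (h * g⁻¹) 1 (Or.inr (Or.inr rfl)),
    mul_one, ← mul_assoc] at H
  linear_combination H

lemma keymul {ω : G → G → G → ℂ} (hu : IsUnitary ω) (hω : IsCocycle ω) (hn : IsNormalized ω)
    (g h k l : G) :
    (ω (k * h⁻¹) (h * g⁻¹) g * ω (l * k⁻¹) (k * g⁻¹) g) *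
      (ω (k * h⁻¹) h g⁻¹ * ω (l * k⁻¹) k g⁻¹) =
    ω (l * h⁻¹) (h * g⁻¹) g * ω (l * h⁻¹) h g⁻¹ := by
  have k1 := key1 hω hn g (l * h⁻¹) h
  have k2 := key1 hω hn g (k * h⁻¹) h
  have k3 := key1 hω hn g (l * k⁻¹) k
  rw [inv_mul_cancel_right] at k1 k2 k3
  have f1 : ω (h * g⁻¹) g g⁻¹ ≠ 0 := omega_ne_zero hu _ _ _
  have f2 : ω (k * g⁻¹) g g⁻¹ ≠ 0 := omega_ne_zero hu _ _ _
  apply mul_left_cancel₀ (mul_ne_zero f1 f2)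
  linear_combination (ω (l * k⁻¹) (k * g⁻¹) g * ω (l * k⁻¹) k g⁻¹ * ω (k * g⁻¹) g g⁻¹) * k2 +
    ω (k * g⁻¹) g g⁻¹ * k3 - ω (k * g⁻¹) g g⁻¹ * k1

lemma conj_core {ω : G → G → G → ℂ} (hu : IsUnitary ω) (hω : IsCocycle ω) (hn : IsNormalized ω)
    (g h k l : G) :
    (starRingEnd ℂ) (ω (l * h⁻¹) (h * g⁻¹) g /
        (ω (k * h⁻¹) (h * g⁻¹) g * ω (l * k⁻¹) (k * g⁻¹) g)) =
      ω (l * h⁻¹) h g⁻¹ / (ω (k * h⁻¹) h g⁻¹ * ω (l * k⁻¹) k g⁻¹) := by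
  rw [map_div₀, _root_.map_mul, conj_omega hu, conj_omega hu, conj_omega hu]
  have hA := omega_ne_zero hu (l * h⁻¹) (h * g⁻¹) g
  have hB := omega_ne_zero hu (k * h⁻¹) (h * g⁻¹) g
  have hC := omega_ne_zero hu (l * k⁻¹) (k * g⁻¹) g
  have hA' := omega_ne_zero hu (l * h⁻¹) h g⁻¹
  have hB' := omega_ne_zero hu (k * h⁻¹) h g⁻¹
  have hC' := omega_ne_zero hu (l * k⁻¹) k g⁻¹
  have km := keymul hu hω hn g h k l
  rw [← mul_inv, inv_div_inv, div_eq_div_iff hA (mul_ne_zero hB' hC')]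
  linear_combination km

variable [DecidableEq G]

/-- `Vmat` evaluated at its unique nonzero row for a given column, raw form. -/
lemma Vmat_self' (ω : G → G → G → ℂ) (g : G) (r : G × G × G) :
    Vmat ω g (r.1 * g⁻¹, r.2.1 * g⁻¹, r.2.2 * g⁻¹) r =
      ω (r.2.2 * r.1⁻¹) (r.1 * g⁻¹) g /
        (ω (r.2.1 * r.1⁻¹) (r.1 * g⁻¹) g * ω (r.2.2 * r.2.1⁻¹) (r.2.1 * g⁻¹) g) := by
  unfold Vmat
  rw [if_pos rfl]

lemma Vmat_ne' (ω : G → G → G → ℂ) (g : G) (r c : G × G × G)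
    (h : c ≠ (r.1 * g⁻¹, r.2.1 * g⁻¹, r.2.2 * g⁻¹)) : Vmat ω g c r = 0 := by
  unfold Vmat
  rw [if_neg h]

/-- `Vmat` evaluated at its unique nonzero column for a given row. -/
lemma Vmat_self (ω : G → G → G → ℂ) (g : G) (r : G × G × G) :
    Vmat ω g r (r.1 * g, r.2.1 * g, r.2.2 * g) =
      ω (r.2.2 * r.1⁻¹) r.1 g /
        (ω (r.2.1 * r.1⁻¹) r.1 g * ω (r.2.2 * r.2.1⁻¹) r.2.1 g) := by
  unfold Vmat
  rw [if_pos (by simp [mul_inv_cancel_right])]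
  simp only [_root_.mul_inv_rev, mul_assoc, mul_inv_cancel_left, mul_inv_cancel,
    mul_one, inv_mul_cancel_left, inv_mul_cancel, mul_inv_cancel_right]

lemma Vmat_ne (ω : G → G → G → ℂ) (g : G) (r c : G × G × G)
    (h : c ≠ (r.1 * g, r.2.1 * g, r.2.2 * g)) : Vmat ω g r c = 0 := by
  unfold Vmat
  rw [if_neg]
  intro hr
  apply h
  rw [hr]
  simp [inv_mul_cancel_right]

lemma conj_Vmat {ω : G → G → G → ℂ} (hu : IsUnitary ω) (hω : IsCocycle ω) (hn : IsNormalized ω)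
    (g : G) (r c : G × G × G) :
    (starRingEnd ℂ) (Vmat ω g c r) = Vmat ω g⁻¹ r c := by
  by_cases h : c = (r.1 * g⁻¹, r.2.1 * g⁻¹, r.2.2 * g⁻¹)
  · subst h
    unfold Vmat
    rw [if_pos rfl]
    simp only [_root_.mul_inv_rev, inv_inv, mul_assoc, inv_mul_cancel_left, mul_inv_cancel_left,
      inv_mul_cancel_right, mul_inv_cancel_right, inv_mul_cancel, mul_inv_cancel, mul_one,
      Prod.mk.eta, eq_self_iff_true, if_true]
    exact conj_core hu hω hn g r.1 r.2.1 r.2.2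
  · unfold Vmat
    rw [if_neg h, map_zero, if_neg]
    intro hr
    apply h
    rw [hr]
    simp [inv_inv, mul_inv_cancel_right]

end Aux

theorem Vmat_unitary {G : Type*} [Group G] [Fintype G] [DecidableEq G]
    (ω : G → G → G → ℂ) (hu : IsUnitary ω) (hω : IsCocycle ω) (hn : IsNormalized ω) :
    ∀ g : G, (Vmat ω g)ᴴ = Vmat ω g⁻¹ ∧
      Vmat ω g * (Vmat ω g)ᴴ = 1 ∧ (Vmat ω g)ᴴ * Vmat ω g = 1 := by
  intro g
  have hadj : (Vmat ω g)ᴴ = Vmat ω g⁻¹ := by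
    ext r c
    exact conj_Vmat hu hω hn g r c
  have habs : ∀ (a b c d e : G), ‖ω a b g / (ω c b g * ω d e g)‖ = 1 := by
    intro a b c d e
    rw [norm_div, norm_mul, hu, hu, hu]
    norm_num
  refine ⟨hadj, ?_, ?_⟩
  · ext r s
    rw [Matrix.mul_apply, Matrix.one_apply]
    rw [Finset.sum_eq_single ((r.1 * g, r.2.1 * g, r.2.2 * g) : G × G × G)]
    · rw [conjTranspose_apply, Vmat_self, ← starRingEnd_apply]
      by_cases hrs : r = s
      · subst hrs
        rw [if_pos rfl, Vmat_self]
        exact unit_mul_conj (habs _ _ _ _ _)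
      · rw [if_neg hrs, Vmat_ne ω g s _ (fun hc => hrs (by
          rw [Prod.ext_iff, Prod.ext_iff] at hc
          obtain ⟨h1, h2, h3⟩ := hc
          rw [mul_left_inj] at h1 h2 h3
          exact Prod.ext h1 (Prod.ext h2 h3))), map_zero, mul_zero]
    · intro x _ hx
      rw [Vmat_ne ω g r x hx, zero_mul]
    · intro hmem
      exact absurd (Finset.mem_univ _) hmem
  · ext r s
    rw [Matrix.mul_apply, Matrix.one_apply]
    simp only [conjTranspose_apply]
    rw [Finset.sum_eq_single ((r.1 * g⁻¹, r.2.1 * g⁻¹, r.2.2 * g⁻¹) : G × G × G)]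
    · rw [Vmat_self', ← starRingEnd_apply]
      by_cases hrs : r = s
      · subst hrs
        rw [if_pos rfl, Vmat_self', mul_comm]
        exact unit_mul_conj (habs _ _ _ _ _)
      · rw [if_neg hrs, Vmat_ne' ω g s _ (fun hc => hrs (by
          rw [Prod.ext_iff, Prod.ext_iff] at hc
          obtain ⟨h1, h2, h3⟩ := hc
          rw [mul_left_inj] at h1 h2 h3
          exact Prod.ext h1 (Prod.ext h2 h3))), mul_zero]
    · intro x _ hx
      rw [Vmat_ne' ω g r x hx, star_zero, zero_mul]
    · intro hmem
      exact absurd (Finset.mem_univ _) hmem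
end

section
/- For a finite group G with a normalized 3-cocycle ω, the operator P^ω := (1/|G|)·Σ_{g∈G} V^ω(g) on (ℂG)^{⊗3} is a Hermitian projection (P^ω² = P^ω = (P^ω)†) of rank |G|². -/
open scoped BigOperators
open Matrix

/-- The twisted symmetrizer `P^ω = (1/|G|) Σ_g V^ω(g)`. -/
noncomputable def Pmat (G : Type*) [Group G] [Fintype G] [DecidableEq G]
    (ω : G → G → G → ℂ) : Matrix (G × G × G) (G × G × G) ℂ :=
  (Fintype.card G : ℂ)⁻¹ • ∑ g : G, Vmat ω g

section aux
variable {G : Type*} [Group G] (ω : G → G → G → ℂ)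

lemma omega_ne (hu : IsUnitary ω) (a b c : G) : ω a b c ≠ 0 := by
  intro h
  have := hu a b c
  rw [h] at this
  simp at this

lemma star_omega (hu : IsUnitary ω) (a b c : G) : star (ω a b c) = (ω a b c)⁻¹ := by
  have h : ω a b c * star (ω a b c) = 1 := by
    rw [show (star (ω a b c)) = (starRingEnd ℂ) (ω a b c) from rfl, Complex.mul_conj,
      Complex.normSq_eq_norm_sq, hu a b c]
    norm_num
  exact eq_inv_of_mul_eq_one_right (by linear_combination h)

lemma scalar_mul (hu : IsUnitary ω) (hω : IsCocycle ω) (g h x1 x2 x3 : G) :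
    ω (x3*x1⁻¹) (x1*h⁻¹*g⁻¹) g / (ω (x2*x1⁻¹) (x1*h⁻¹*g⁻¹) g * ω (x3*x2⁻¹) (x2*h⁻¹*g⁻¹) g)
      * (ω (x3*x1⁻¹) (x1*h⁻¹) h / (ω (x2*x1⁻¹) (x1*h⁻¹) h * ω (x3*x2⁻¹) (x2*h⁻¹) h))
    = ω (x3*x1⁻¹) (x1*h⁻¹*g⁻¹) (g*h)
        / (ω (x2*x1⁻¹) (x1*h⁻¹*g⁻¹) (g*h) * ω (x3*x2⁻¹) (x2*h⁻¹*g⁻¹) (g*h)) := by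
  have hb1 : (x1*h⁻¹*g⁻¹)*g = x1*h⁻¹ := by group
  have hb2 : (x2*h⁻¹*g⁻¹)*g = x2*h⁻¹ := by group
  have hab12 : (x2*x1⁻¹)*(x1*h⁻¹*g⁻¹) = x2*h⁻¹*g⁻¹ := by group
  have hab13 : (x3*x1⁻¹)*(x1*h⁻¹*g⁻¹) = x3*h⁻¹*g⁻¹ := by group
  have hab23 : (x3*x2⁻¹)*(x2*h⁻¹*g⁻¹) = x3*h⁻¹*g⁻¹ := by group
  have e12 := hω (x2*x1⁻¹) (x1*h⁻¹*g⁻¹) g h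
  have e13 := hω (x3*x1⁻¹) (x1*h⁻¹*g⁻¹) g h
  have e23 := hω (x3*x2⁻¹) (x2*h⁻¹*g⁻¹) g h
  rw [hb1, hab12] at e12
  rw [hb1, hab13] at e13
  rw [hb2, hab23] at e23
  have n1 := omega_ne ω hu (x1*h⁻¹*g⁻¹) g h
  have n2 := omega_ne ω hu (x2*h⁻¹*g⁻¹) g h
  have n3 := omega_ne ω hu (x3*h⁻¹*g⁻¹) g h
  rw [div_mul_div_comm, div_eq_div_iff
    (mul_ne_zero (mul_ne_zero (omega_ne ω hu _ _ _) (omega_ne ω hu _ _ _))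
      (mul_ne_zero (omega_ne ω hu _ _ _) (omega_ne ω hu _ _ _)))
    (mul_ne_zero (omega_ne ω hu _ _ _) (omega_ne ω hu _ _ _))]
  apply mul_left_cancel₀ (mul_ne_zero n1 (mul_ne_zero n2 n3))
  linear_combination (ω (x2*h⁻¹*g⁻¹) g h * ω (x3*h⁻¹*g⁻¹) g h * ω (x2*x1⁻¹) (x1*h⁻¹*g⁻¹) (g*h)
        * ω (x3*x2⁻¹) (x2*h⁻¹*g⁻¹) (g*h)) * e13
    - (ω (x2*h⁻¹*g⁻¹) g h * ω (x3*h⁻¹*g⁻¹) g h * ω (x3*x1⁻¹) (x1*h⁻¹*g⁻¹) (g*h)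
        * ω (x3*x2⁻¹) (x2*h⁻¹*g⁻¹) g * ω (x3*x2⁻¹) (x2*h⁻¹) h) * e12
    - (ω (x2*h⁻¹*g⁻¹) g h * ω (x3*h⁻¹*g⁻¹) g h * ω (x3*x1⁻¹) (x1*h⁻¹*g⁻¹) (g*h)
        * ω (x2*x1⁻¹) (x1*h⁻¹*g⁻¹) (g*h)) * e23

lemma scalar_herm (hu : IsUnitary ω) (hω : IsCocycle ω) (hn : IsNormalized ω) (g x1 x2 x3 : G) :
    star (ω (x3*x1⁻¹) x1 g / (ω (x2*x1⁻¹) x1 g * ω (x3*x2⁻¹) x2 g))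
    = ω (x3*x1⁻¹) (x1*g) g⁻¹ / (ω (x2*x1⁻¹) (x1*g) g⁻¹ * ω (x3*x2⁻¹) (x2*g) g⁻¹) := by
  have e12 := hω (x2*x1⁻¹) x1 g g⁻¹
  have e13 := hω (x3*x1⁻¹) x1 g g⁻¹
  have e23 := hω (x3*x2⁻¹) x2 g g⁻¹
  rw [mul_inv_cancel, hn _ _ 1 (Or.inr (Or.inr rfl)), mul_one,
    inv_mul_cancel_right] at e12 e13 e23
  have n1 := omega_ne ω hu x1 g g⁻¹
  have n2 := omega_ne ω hu x2 g g⁻¹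
  have nE12 := omega_ne ω hu (x2*x1⁻¹) x1 g
  have nE13 := omega_ne ω hu (x3*x1⁻¹) x1 g
  have nE23 := omega_ne ω hu (x3*x2⁻¹) x2 g
  have nD12 := omega_ne ω hu (x2*x1⁻¹) (x1*g) g⁻¹
  have nD23 := omega_ne ω hu (x3*x2⁻¹) (x2*g) g⁻¹
  rw [star_div₀, star_mul', star_omega ω hu, star_omega ω hu, star_omega ω hu]
  have key : ω (x2*x1⁻¹) x1 g * ω (x3*x2⁻¹) x2 g
        * (ω (x2*x1⁻¹) (x1*g) g⁻¹ * ω (x3*x2⁻¹) (x2*g) g⁻¹)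
      = ω (x3*x1⁻¹) (x1*g) g⁻¹ * ω (x3*x1⁻¹) x1 g := by
    apply mul_left_cancel₀ (mul_ne_zero n1 n2)
    linear_combination (ω (x3*x2⁻¹) x2 g * ω (x3*x2⁻¹) (x2*g) g⁻¹ * ω x2 g g⁻¹) * e12
      + ω x2 g g⁻¹ * e23 - ω x2 g g⁻¹ * e13
  have inv_div_inv : ∀ a b c : ℂ, a ≠ 0 → b ≠ 0 → c ≠ 0 →
      a⁻¹ / (b⁻¹ * c⁻¹) = b * c / a := by
    intro a b c ha hb hc; field_simp
  rw [inv_div_inv _ _ _ nE13 nE12 nE23,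
    div_eq_div_iff nE13 (mul_ne_zero nD12 nD23)]
  linear_combination key

end aux

section mat
variable {G : Type*} [Group G] [DecidableEq G] (ω : G → G → G → ℂ)

lemma Vone (hn : IsNormalized ω) : Vmat ω (1 : G) = 1 := by
  ext r c
  simp only [Vmat, inv_one, mul_one, Matrix.one_apply]
  by_cases h : r = c
  · subst h
    rw [if_pos (by simp), hn _ _ 1 (Or.inr (Or.inr rfl)), hn _ _ 1 (Or.inr (Or.inr rfl)),
      hn _ _ 1 (Or.inr (Or.inr rfl))]
    norm_num
  · rw [if_neg (by simpa using h), if_neg h]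

lemma Vmul [Fintype G] (hu : IsUnitary ω) (hω : IsCocycle ω) (g h : G) :
    Vmat ω g * Vmat ω h = Vmat ω (g * h) := by
  ext r c
  obtain ⟨c1, c2, c3⟩ := c
  rw [Matrix.mul_apply]
  rw [Finset.sum_eq_single (c1 * h⁻¹, c2 * h⁻¹, c3 * h⁻¹)]
  · -- main term
    by_cases hr : r = (c1 * h⁻¹ * g⁻¹, c2 * h⁻¹ * g⁻¹, c3 * h⁻¹ * g⁻¹)
    · subst hr
      have h1 : c1 * (g * h)⁻¹ = c1 * h⁻¹ * g⁻¹ := by group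
      have h2 : c2 * (g * h)⁻¹ = c2 * h⁻¹ * g⁻¹ := by group
      have h3 : c3 * (g * h)⁻¹ = c3 * h⁻¹ * g⁻¹ := by group
      simp only [Vmat, h1, h2, h3, if_pos rfl]
      have e1 : c2 * h⁻¹ * (c1 * h⁻¹)⁻¹ = c2 * c1⁻¹ := by group
      have e2 : c3 * h⁻¹ * (c1 * h⁻¹)⁻¹ = c3 * c1⁻¹ := by group
      have e3 : c3 * h⁻¹ * (c2 * h⁻¹)⁻¹ = c3 * c2⁻¹ := by group
      rw [e1, e2, e3]
      exact scalar_mul ω hu hω g h c1 c2 c3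
    · rw [Vmat]
      simp only
      rw [if_neg hr]
      have hr' : r ≠ (c1 * (g*h)⁻¹, c2 * (g*h)⁻¹, c3 * (g*h)⁻¹) := by
        intro hh
        apply hr
        rw [hh]
        have h1 : c1 * (g * h)⁻¹ = c1 * h⁻¹ * g⁻¹ := by group
        have h2 : c2 * (g * h)⁻¹ = c2 * h⁻¹ * g⁻¹ := by group
        have h3 : c3 * (g * h)⁻¹ = c3 * h⁻¹ * g⁻¹ := by group
        rw [h1, h2, h3]
      rw [show Vmat ω (g*h) r (c1, c2, c3) = 0 from by rw [Vmat]; exact if_neg hr']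
      ring
  · intro b _ hb
    have : Vmat ω h b (c1, c2, c3) = 0 := by
      rw [Vmat]
      exact if_neg (by simpa [eq_comm] using hb)
    rw [this, mul_zero]
  · intro hmem
    exact absurd (Finset.mem_univ _) hmem

lemma Vherm (hu : IsUnitary ω) (hω : IsCocycle ω) (hn : IsNormalized ω) (g : G) :
    (Vmat ω g)ᴴ = Vmat ω g⁻¹ := by
  ext r c
  obtain ⟨r1, r2, r3⟩ := r
  obtain ⟨c1, c2, c3⟩ := c
  rw [Matrix.conjTranspose_apply]
  by_cases hr : (r1, r2, r3) = ((c1 * g, c2 * g, c3 * g) : G × G × G)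
  · rw [hr]
    have hc : ((c1, c2, c3) : G × G × G) = (c1 * g * g⁻¹, c2 * g * g⁻¹, c3 * g * g⁻¹) := by
      simp
    have hval : Vmat ω g (c1, c2, c3) (c1 * g, c2 * g, c3 * g)
        = ω (c3 * c1⁻¹) c1 g / (ω (c2 * c1⁻¹) c1 g * ω (c3 * c2⁻¹) c2 g) := by
      rw [Vmat]
      simp only
      rw [if_pos (by simpa using hc)]
      have e0 : c1 * g * g⁻¹ = c1 := by group
      have e0' : c2 * g * g⁻¹ = c2 := by group
      have e1 : c2 * g * (c1 * g)⁻¹ = c2 * c1⁻¹ := by group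
      have e2 : c3 * g * (c1 * g)⁻¹ = c3 * c1⁻¹ := by group
      have e3 : c3 * g * (c2 * g)⁻¹ = c3 * c2⁻¹ := by group
      rw [e0, e0', e1, e2, e3]
    have hval' : Vmat ω g⁻¹ (c1 * g, c2 * g, c3 * g) (c1, c2, c3)
        = ω (c3 * c1⁻¹) (c1 * g) g⁻¹ / (ω (c2 * c1⁻¹) (c1 * g) g⁻¹ * ω (c3 * c2⁻¹) (c2 * g) g⁻¹) := by
      rw [Vmat]
      simp only [inv_inv, if_pos rfl]
      simp
    rw [hval, hval']
    exact scalar_herm ω hu hω hn g c1 c2 c3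
  · have h1 : Vmat ω g (c1, c2, c3) (r1, r2, r3) = 0 := by
      rw [Vmat]
      apply if_neg
      intro hh
      simp only [Prod.mk.injEq] at hh
      obtain ⟨e1, e2, e3⟩ := hh
      exact hr (by simp [e1, e2, e3])
    have h2 : Vmat ω g⁻¹ (r1, r2, r3) (c1, c2, c3) = 0 := by
      rw [Vmat]
      apply if_neg
      simpa using hr
    rw [h1, h2, star_zero]

lemma Vdiag_ne (g : G) (hg : g ≠ 1) (r : G × G × G) : Vmat ω g r r = 0 := by
  rw [Vmat]
  apply if_neg
  intro hh
  apply hg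
  have : r.1 = r.1 * g⁻¹ := congrArg Prod.fst hh
  have h2 : r.1 * 1 = r.1 * g⁻¹ := by simpa using this
  have := mul_left_cancel h2
  simpa [eq_comm, inv_eq_one] using this

end mat

section rk
lemma rank_cast_eq_trace {n : Type*} [Fintype n] [DecidableEq n]
    (A : Matrix n n ℂ) (h : A * A = A) : (A.rank : ℂ) = A.trace := by
  have hl : A.mulVecLin ∘ₗ A.mulVecLin = A.mulVecLin := by
    rw [← Matrix.mulVecLin_mul, h]
  obtain ⟨p, hp⟩ := (LinearMap.isProj_iff_isIdempotentElem A.mulVecLin).mpr hl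
  have hrange : LinearMap.range A.mulVecLin = p := by
    apply le_antisymm
    · rintro x ⟨y, rfl⟩
      exact hp.map_mem y
    · intro x hx
      exact ⟨x, hp.map_id x hx⟩
  have htr := hp.trace
  rw [Matrix.rank, hrange, ← htr, LinearMap.trace_eq_matrix_trace ℂ (Pi.basisFun ℂ n),
    LinearMap.toMatrix_eq_toMatrix', ← Matrix.toLin'_apply', LinearMap.toMatrix'_toLin']
end rk


theorem Pmat_projection {G : Type*} [Group G] [Fintype G] [DecidableEq G]
    (ω : G → G → G → ℂ) (hu : IsUnitary ω) (hω : IsCocycle ω) (hn : IsNormalized ω) :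
    Pmat G ω * Pmat G ω = Pmat G ω ∧ (Pmat G ω)ᴴ = Pmat G ω ∧
      (Pmat G ω).rank = Fintype.card G ^ 2 := by
  set S : Matrix (G × G × G) (G × G × G) ℂ := ∑ g : G, Vmat ω g with hS
  have hcard : ((Fintype.card G : ℂ)) ≠ 0 := by
    exact_mod_cast Fintype.card_ne_zero
  have hSS : S * S = (Fintype.card G : ℂ) • S := by
    rw [hS, Finset.sum_mul_sum]
    have hrow : ∀ g ∈ Finset.univ, (∑ h : G, Vmat ω g * Vmat ω h) = S := by
      intro g _
      calc (∑ h : G, Vmat ω g * Vmat ω h) = ∑ h : G, Vmat ω (g * h) := by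
            refine Finset.sum_congr rfl fun h _ => Vmul ω hu hω g h
        _ = S := Fintype.sum_equiv (Equiv.mulLeft g) _ _ (fun h => rfl)
    rw [Finset.sum_congr rfl hrow, Finset.sum_const, Finset.card_univ, ← hS]
    exact (Nat.cast_smul_eq_nsmul ℂ _ _).symm
  have hP2 : Pmat G ω * Pmat G ω = Pmat G ω := by
    rw [Pmat, Matrix.smul_mul, Matrix.mul_smul, hSS, smul_smul, smul_smul]
    congr 1
    field_simp
  refine ⟨hP2, ?_, ?_⟩
  · rw [Pmat, Matrix.conjTranspose_smul, Matrix.conjTranspose_sum]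
    have h1 : (∑ g : G, (Vmat ω g)ᴴ) = S := by
      calc (∑ g : G, (Vmat ω g)ᴴ) = ∑ g : G, Vmat ω g⁻¹ := by
            refine Finset.sum_congr rfl fun g _ => Vherm ω hu hω hn g
        _ = S := Fintype.sum_equiv (Equiv.inv G) _ _ (fun g => rfl)
    rw [h1]
    congr 1
    simp [star_inv₀]
  · have htrS : S.trace = ((Fintype.card G : ℂ)) ^ 3 := by
      rw [hS, Matrix.trace_sum, Finset.sum_eq_single 1]
      · rw [Vone ω hn, Matrix.trace_one, Fintype.card_prod, Fintype.card_prod]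
        push_cast
        ring
      · intro g _ hg
        rw [Matrix.trace]
        refine Finset.sum_eq_zero fun r _ => ?_
        rw [Matrix.diag_apply, Vdiag_ne ω g hg r]
      · intro hmem
        exact absurd (Finset.mem_univ _) hmem
    have hrk := rank_cast_eq_trace (Pmat G ω) hP2
    have htrP : (Pmat G ω).trace = ((Fintype.card G : ℂ)) ^ 2 := by
      rw [Pmat, Matrix.trace_smul, htrS]
      rw [smul_eq_mul, mul_comm, pow_succ, mul_inv_cancel_right₀ hcard]
    rw [htrP] at hrk
    exact_mod_cast hrk
end

section
/- Let G be a finite group with normalized 3-cocycle ω, and define the Dijkgraaf-Witten triangle map A^ω_DW = Σ_{g₁,g₂,g₃∈G} ω(g₃g₂⁻¹, g₂g₁⁻¹, g₁)⁻¹ |g₂g₁⁻¹, g₃g₂⁻¹, g₃g₁⁻¹⟩⟨g₁,g₂,g₃| on (ℂG)^{⊗3}. Then (A^ω_DW)†·A^ω_DW = |G|·P^ω, where P^ω = (1/|G|)Σ_{g} V^ω(g) is the twisted symmetrizer. -/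
open scoped BigOperators
open Matrix

/-- The Dijkgraaf–Witten triangle map
`A^ω_DW = Σ ω(g₃g₂⁻¹, g₂g₁⁻¹, g₁)⁻¹ |g₂g₁⁻¹, g₃g₂⁻¹, g₃g₁⁻¹⟩⟨g₁,g₂,g₃|`. -/
noncomputable def Adw {G : Type*} [Group G] [DecidableEq G]
    (ω : G → G → G → ℂ) : Matrix (G × G × G) (G × G × G) ℂ :=
  fun r c =>
    if r = (c.2.1 * c.1⁻¹, c.2.2 * c.2.1⁻¹, c.2.2 * c.1⁻¹) then
      (ω (c.2.2 * c.2.1⁻¹) (c.2.1 * c.1⁻¹) c.1)⁻¹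
    else 0

theorem Adw_isometry {G : Type*} [Group G] [Fintype G] [DecidableEq G]
    (ω : G → G → G → ℂ) (hu : IsUnitary ω) (hω : IsCocycle ω) (hn : IsNormalized ω) :
    (Adw ω)ᴴ * Adw ω = (Fintype.card G : ℂ) • Pmat G ω := by
  have hne : ∀ a b c : G, ω a b c ≠ 0 := by
    intro a b c h
    have := hu a b c
    rw [h] at this
    simp at this
  have hstar : ∀ a b c : G, star (ω a b c) = (ω a b c)⁻¹ := by
    intro a b c
    have h1 : ω a b c * star (ω a b c) = 1 := by
      rw [show star (ω a b c) = (starRingEnd ℂ) (ω a b c) from rfl, Complex.mul_conj]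
      norm_cast
      rw [Complex.normSq_eq_norm_sq, hu]
      norm_num
    exact (inv_eq_of_mul_eq_one_right h1).symm
  have hcard : (Fintype.card G : ℂ) ≠ 0 := Nat.cast_ne_zero.mpr Fintype.card_ne_zero
  ext ⟨r1, r2, r3⟩ ⟨c1, c2, c3⟩
  rw [Matrix.mul_apply]
  simp only [Pmat, Matrix.smul_apply, Matrix.sum_apply, smul_eq_mul, ← mul_assoc,
    mul_inv_cancel₀ hcard, one_mul]
  simp only [Adw, Matrix.conjTranspose_apply, apply_ite, star_zero,
    ite_mul, zero_mul, mul_ite, mul_zero, Finset.sum_ite_eq', Finset.mem_univ, if_true]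
  rw [Finset.sum_eq_single (r1⁻¹ * c1) ?_ ?_]
  rotate_left
  · intro g _ hg
    rw [Vmat, if_neg]
    intro hh
    apply hg
    have h1 : r1 = c1 * g⁻¹ := congrArg Prod.fst hh
    rw [h1]; group
  · intro h; exact absurd (Finset.mem_univ _) h
  rw [Vmat]
  dsimp only
  by_cases h : r2 = c2 * c1⁻¹ * r1 ∧ r3 = c3 * c1⁻¹ * r1
  · obtain ⟨h2, h3⟩ := h
    subst h2 h3
    rw [if_pos, if_pos]
    rotate_left
    · simp only [Prod.mk.injEq]
      refine ⟨by group, by group, by group⟩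
    · simp only [Prod.mk.injEq]
      refine ⟨by group, by group, by group⟩
    have e1 : (c3 * c1⁻¹ * r1) * (c2 * c1⁻¹ * r1)⁻¹ = c3 * c2⁻¹ := by group
    have e2 : (c2 * c1⁻¹ * r1) * r1⁻¹ = c2 * c1⁻¹ := by group
    have e3 : c1 * (r1⁻¹ * c1)⁻¹ = r1 := by group
    have e4 : c2 * (r1⁻¹ * c1)⁻¹ = c2 * c1⁻¹ * r1 := by group
    simp only [e1, e2, e3, e4, star_inv₀, hstar, inv_inv]
    have key := hω (c3 * c2⁻¹) (c2 * c1⁻¹) r1 (r1⁻¹ * c1)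
    have e5 : (c2 * c1⁻¹) * r1 = c2 * c1⁻¹ * r1 := by group
    have e6 : (c3 * c2⁻¹) * (c2 * c1⁻¹) = c3 * c1⁻¹ := by group
    have e7 : r1 * (r1⁻¹ * c1) = c1 := by group
    rw [e5, e6, e7] at key
    rw [show ω (c3 * c2⁻¹) (c2 * c1⁻¹) r1 * (ω (c3 * c2⁻¹) (c2 * c1⁻¹) c1)⁻¹
        = ω (c3 * c2⁻¹) (c2 * c1⁻¹) r1 / ω (c3 * c2⁻¹) (c2 * c1⁻¹) c1 from
        (div_eq_mul_inv _ _).symm,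
      div_eq_div_iff (hne _ _ _) (mul_ne_zero (hne _ _ _) (hne _ _ _))]
    linear_combination key
  · rw [if_neg, if_neg]
    · intro hh
      simp only [Prod.mk.injEq] at hh
      obtain ⟨h1, h2, h3⟩ := hh
      exact h ⟨by rw [h2]; group, by rw [h3]; group⟩
    · intro hh
      simp only [Prod.mk.injEq] at hh
      obtain ⟨h1, h2, h3⟩ := hh
      exact h ⟨by rw [h1]; group, by rw [h3]; group⟩
end
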